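/- Fix γ ≠ 0 and let V = ℂ^n. Suppose A, B, C, D : ℂ^n → End(V ⊗ V) and K : ℂ^n → End(V) satisfy the semi-dynamical reflection equation A K_1 B K_2(λ+h_1) = K_2 C K_1(λ+h_2) D. Let g ∈ GL(n,ℂ) be a diagonal matrix (so g commutes with all e_{ii}) such that [D(λ), g ⊗ g] = 0, [B(λ), g ⊗ 1] = 0, [C(λ), 1 ⊗ g] = 0, and [A(λ), g ⊗ g] = 0 for all λ. Then for every integer k, the function λ ↦ K(λ) g^k is also a solution of the same semi-dynamical reflection equation. -/

import Mathlib

open Matrix Kronecker BigOperators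

/-- `γ ε_i` : the shift vector adding `γ` to the `i`-th dynamical coordinate. -/
def eps (n : ℕ) (γ : ℂ) (i : Fin n) : Fin n → ℂ := fun j => if j = i then γ else 0

/-- `e_{ii}` diagonal matrix unit. -/
def E {n : ℕ} (i : Fin n) : Matrix (Fin n) (Fin n) ℂ := Matrix.single i i 1

/-- Space-1 dynamical shift `X₁(λ+h₂) = ∑ᵢ X(λ+γεᵢ) ⊗ e_{ii}`. -/
noncomputable def sh1 {n : ℕ} (γ : ℂ) (X : (Fin n → ℂ) → Matrix (Fin n) (Fin n) ℂ)
    (l : Fin n → ℂ) : Matrix (Fin n × Fin n) (Fin n × Fin n) ℂ :=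
  ∑ i : Fin n, X (l + eps n γ i) ⊗ₖ E i

/-- Space-2 dynamical shift `X₂(λ+h₁) = ∑ᵢ e_{ii} ⊗ X(λ+γεᵢ)`. -/
noncomputable def sh2 {n : ℕ} (γ : ℂ) (X : (Fin n → ℂ) → Matrix (Fin n) (Fin n) ℂ)
    (l : Fin n → ℂ) : Matrix (Fin n × Fin n) (Fin n × Fin n) ℂ :=
  ∑ i : Fin n, E i ⊗ₖ X (l + eps n γ i)

/-- The semi-dynamical reflection equation
`A K₁ B K₂(λ+h₁) = K₂ C K₁(λ+h₂) D`. -/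
noncomputable def SDRE {n : ℕ} (γ : ℂ)
    (A B C D : (Fin n → ℂ) → Matrix (Fin n × Fin n) (Fin n × Fin n) ℂ)
    (K : (Fin n → ℂ) → Matrix (Fin n) (Fin n) ℂ) : Prop :=
  ∀ l : Fin n → ℂ,
    A l * (K l ⊗ₖ (1 : Matrix (Fin n) (Fin n) ℂ)) * B l * sh2 γ K l
      = ((1 : Matrix (Fin n) (Fin n) ℂ) ⊗ₖ K l) * C l * sh1 γ K l * D l

/- Auxiliary lemmas -/

lemma kron_pow {n : ℕ} (X Y : Matrix (Fin n) (Fin n) ℂ) (m : ℕ) :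
    (X ⊗ₖ Y) ^ m = (X ^ m) ⊗ₖ (Y ^ m) := by
  induction m with
  | zero => simp [Matrix.one_kronecker_one]
  | succ m ih => rw [pow_succ, pow_succ, pow_succ, ih, Matrix.mul_kronecker_mul]

lemma kron_zpow {n : ℕ} (X Y : Matrix (Fin n) (Fin n) ℂ) (k : ℤ) :
    (X ⊗ₖ Y) ^ k = (X ^ k) ⊗ₖ (Y ^ k) := by
  cases k with
  | ofNat m => simpa using kron_pow X Y m
  | negSucc m =>
      rw [zpow_negSucc, zpow_negSucc, zpow_negSucc, kron_pow, Matrix.inv_kronecker]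

lemma E_eq_diagonal {n : ℕ} (i : Fin n) :
    E i = Matrix.diagonal (fun j => if j = i then (1 : ℂ) else 0) := by
  ext a b
  simp only [E, Matrix.single, Matrix.diagonal, Matrix.of_apply]
  by_cases hab : a = b <;> by_cases ha : a = i <;> by_cases hb : b = i <;> simp_all <;> aesop

lemma E_comm_diag {n : ℕ} (i : Fin n) (d : Fin n → ℂ) :
    Commute (E i) (Matrix.diagonal d) := by
  rw [E_eq_diagonal]
  unfold Commute SemiconjBy
  have h : (fun j => (if j = i then (1:ℂ) else 0) * d j)
      = fun j => d j * if j = i then (1:ℂ) else 0 := by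
    funext j; ring
  rw [Matrix.diagonal_mul_diagonal, Matrix.diagonal_mul_diagonal, h]

lemma swap_mul {M : Type*} [Semigroup M] {X Y : M} (h : Commute X Y) (Z : M) :
    X * (Y * Z) = Y * (X * Z) := by
  rw [← mul_assoc, h.eq, mul_assoc]

/-- Proposition 6: if `K` solves the SDRE and `g` is an invertible diagonal
matrix with `[D, g⊗g] = [B, g⊗1] = [C, 1⊗g] = [A, g⊗g] = 0`, then `λ ↦ K(λ) gᵏ` is also
a solution, for every integer `k`. -/
theorem stmt17 (n : ℕ) (γ : ℂ) (hγ : γ ≠ 0)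
    (A B C D : (Fin n → ℂ) → Matrix (Fin n × Fin n) (Fin n × Fin n) ℂ)
    (K : (Fin n → ℂ) → Matrix (Fin n) (Fin n) ℂ)
    (hK : SDRE γ A B C D K)
    (d : Fin n → ℂ) (hd : IsUnit (Matrix.diagonal d))
    (hD : ∀ l, D l * (Matrix.diagonal d ⊗ₖ Matrix.diagonal d)
        = (Matrix.diagonal d ⊗ₖ Matrix.diagonal d) * D l)
    (hB : ∀ l, B l * (Matrix.diagonal d ⊗ₖ (1 : Matrix (Fin n) (Fin n) ℂ))
        = (Matrix.diagonal d ⊗ₖ (1 : Matrix (Fin n) (Fin n) ℂ)) * B l)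
    (hC : ∀ l, C l * ((1 : Matrix (Fin n) (Fin n) ℂ) ⊗ₖ Matrix.diagonal d)
        = ((1 : Matrix (Fin n) (Fin n) ℂ) ⊗ₖ Matrix.diagonal d) * C l)
    (hA : ∀ l, A l * (Matrix.diagonal d ⊗ₖ Matrix.diagonal d)
        = (Matrix.diagonal d ⊗ₖ Matrix.diagonal d) * A l) :
    ∀ k : ℤ, SDRE γ A B C D (fun l => K l * (Matrix.diagonal d) ^ k) := by
  intro k l
  set g : Matrix (Fin n) (Fin n) ℂ := Matrix.diagonal d with hg
  set G : Matrix (Fin n) (Fin n) ℂ := g ^ k with hGdef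
  -- the shifted versions factor
  have s2 : sh2 γ (fun l => K l * G) l
      = sh2 γ K l * ((1 : Matrix (Fin n) (Fin n) ℂ) ⊗ₖ G) := by
    unfold sh2
    rw [Finset.sum_mul]
    exact Finset.sum_congr rfl fun i _ => by
      rw [← Matrix.mul_kronecker_mul, mul_one]
  have s1 : sh1 γ (fun l => K l * G) l
      = sh1 γ K l * (G ⊗ₖ (1 : Matrix (Fin n) (Fin n) ℂ)) := by
    unfold sh1
    rw [Finset.sum_mul]
    exact Finset.sum_congr rfl fun i _ => by
      rw [← Matrix.mul_kronecker_mul, mul_one]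
  -- kronecker powers
  have hG1 : G ⊗ₖ (1 : Matrix (Fin n) (Fin n) ℂ)
      = (g ⊗ₖ (1 : Matrix (Fin n) (Fin n) ℂ)) ^ k := by
    rw [kron_zpow, Matrix.one_zpow]
  have h1G : (1 : Matrix (Fin n) (Fin n) ℂ) ⊗ₖ G
      = ((1 : Matrix (Fin n) (Fin n) ℂ) ⊗ₖ g) ^ k := by
    rw [kron_zpow, Matrix.one_zpow]
  have hGG : G ⊗ₖ G = (g ⊗ₖ g) ^ k := (kron_zpow g g k).symm
  -- commutation facts
  have hEG : ∀ i : Fin n, Commute (E i) G :=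
    fun i => Matrix.Commute.zpow_right (E_comm_diag i d) k
  have cB : Commute (B l) (G ⊗ₖ (1 : Matrix (Fin n) (Fin n) ℂ)) := by
    rw [hG1]; exact Matrix.Commute.zpow_right (hB l) k
  have cC : Commute (C l) ((1 : Matrix (Fin n) (Fin n) ℂ) ⊗ₖ G) := by
    rw [h1G]; exact Matrix.Commute.zpow_right (hC l) k
  have cD : Commute (D l) (G ⊗ₖ G) := by
    rw [hGG]; exact Matrix.Commute.zpow_right (hD l) k
  have csh2 : Commute (sh2 γ K l) (G ⊗ₖ (1 : Matrix (Fin n) (Fin n) ℂ)) := by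
    unfold sh2
    refine Commute.sum_left _ _ _ fun i _ => ?_
    unfold Commute SemiconjBy
    rw [← Matrix.mul_kronecker_mul, ← Matrix.mul_kronecker_mul, (hEG i).eq,
      one_mul, mul_one]
  have csh1 : Commute (sh1 γ K l) ((1 : Matrix (Fin n) (Fin n) ℂ) ⊗ₖ G) := by
    unfold sh1
    refine Commute.sum_left _ _ _ fun i _ => ?_
    unfold Commute SemiconjBy
    rw [← Matrix.mul_kronecker_mul, ← Matrix.mul_kronecker_mul, (hEG i).eq,
      one_mul, mul_one]
  have eG12 : (G ⊗ₖ (1 : Matrix (Fin n) (Fin n) ℂ))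
      * ((1 : Matrix (Fin n) (Fin n) ℂ) ⊗ₖ G) = G ⊗ₖ G := by
    rw [← Matrix.mul_kronecker_mul, mul_one, one_mul]
  have eG21 : ((1 : Matrix (Fin n) (Fin n) ℂ) ⊗ₖ G)
      * (G ⊗ₖ (1 : Matrix (Fin n) (Fin n) ℂ)) = G ⊗ₖ G := by
    rw [← Matrix.mul_kronecker_mul, mul_one, one_mul]
  show A l * ((K l * G) ⊗ₖ (1 : Matrix (Fin n) (Fin n) ℂ)) * B l
        * sh2 γ (fun l => K l * G) l
      = ((1 : Matrix (Fin n) (Fin n) ℂ) ⊗ₖ (K l * G)) * C l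
        * sh1 γ (fun l => K l * G) l * D l
  have e1 : (K l * G) ⊗ₖ (1 : Matrix (Fin n) (Fin n) ℂ)
      = (K l ⊗ₖ (1 : Matrix (Fin n) (Fin n) ℂ))
        * (G ⊗ₖ (1 : Matrix (Fin n) (Fin n) ℂ)) := by
    rw [← Matrix.mul_kronecker_mul, mul_one]
  have e2 : (1 : Matrix (Fin n) (Fin n) ℂ) ⊗ₖ (K l * G)
      = ((1 : Matrix (Fin n) (Fin n) ℂ) ⊗ₖ K l)
        * ((1 : Matrix (Fin n) (Fin n) ℂ) ⊗ₖ G) := by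
    rw [← Matrix.mul_kronecker_mul, mul_one]
  rw [s1, s2, e1, e2]
  simp only [mul_assoc]
  rw [swap_mul cB.symm, swap_mul csh2.symm, eG12,
      swap_mul cC.symm, swap_mul csh1.symm,
      ← mul_assoc ((1 : Matrix (Fin n) (Fin n) ℂ) ⊗ₖ G) (G ⊗ₖ (1 : Matrix (Fin n) (Fin n) ℂ))
        (D l),
      eG21, cD.symm.eq]
  simp only [← mul_assoc]
  rw [hK l]
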